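/- Let S = k[a,b,c] and suppose I = (f_1, f_2, f_3, f_4) is generated by four forms of degree 5, with f_1, f_2, f_3 a regular sequence, and suppose S/I has Hilbert function (1,3,6,10,15,17,17,17,15,10,0,0,...). Let J = (f_1,f_2,f_3) : (f_4). Then the short exact sequence 0 → (S/J)(−5) → S/(f_1,f_2,f_3) → S/I → 0 forces S/J to have Hilbert function (1,2,1,0,0,6,3,1), which is impossible (a Hilbert function of a standard graded algebra that vanishes in some degree must vanish in all higher degrees). Hence no such ideal I exists. -/

import Mathlib

open MvPolynomial Classical

/-- The degree-`e` graded piece of `R/I`, where `R = k[x_1,…,x_n]`. -/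
noncomputable def gradedPiece (k : Type) [Field k] (n : ℕ)
    (I : Ideal (MvPolynomial (Fin n) k)) (e : ℕ) :
    Submodule k (MvPolynomial (Fin n) k ⧸ I) :=
  (homogeneousSubmodule (Fin n) k e).map (Ideal.Quotient.mkₐ k I).toLinearMap

/-- The Hilbert function of `R/I`. -/
noncomputable def hilb (k : Type) [Field k] (n : ℕ)
    (I : Ideal (MvPolynomial (Fin n) k)) (t : ℕ) : ℕ :=
  Module.finrank k (gradedPiece k n I t)

/-- `I` is a homogeneous ideal. -/
def IsHomog {k : Type} [Field k] {n : ℕ} (I : Ideal (MvPolynomial (Fin n) k)) : Prop :=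
  ∃ S : Set (MvPolynomial (Fin n) k),
    (∀ f ∈ S, ∃ e, f.IsHomogeneous e) ∧ I = Ideal.span S

/-- The Koszul differential on `⊕_{S ⊆ {x_1,…,x_n}} R/I`  (the Koszul complex
on the variables tensored with `R/I`, with all homological pieces bundled together). -/
noncomputable def koszulD (k : Type) [Field k] (n : ℕ)
    (I : Ideal (MvPolynomial (Fin n) k)) :
    (Finset (Fin n) → (MvPolynomial (Fin n) k ⧸ I)) →ₗ[k]
      (Finset (Fin n) → (MvPolynomial (Fin n) k ⧸ I)) :=
  LinearMap.pi fun S =>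
    ∑ t ∈ Sᶜ, ((-1 : ℤ) ^ (S.filter (fun u => u < t)).card) •
      ((LinearMap.mulLeft k (Ideal.Quotient.mk I (X t))).comp
        (LinearMap.proj (insert t S)))

/-- The internal-degree-`j`, homological-degree-`i` piece of the Koszul complex of `R/I`:
functions supported on `i`-element subsets, with values in the graded piece of degree `j - i`. -/
noncomputable def koszulPiece (k : Type) [Field k] (n : ℕ)
    (I : Ideal (MvPolynomial (Fin n) k)) (i j : ℕ) :
    Submodule k (Finset (Fin n) → (MvPolynomial (Fin n) k ⧸ I)) :=
  Submodule.pi Set.univ fun S =>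
    if S.card = i ∧ i ≤ j then gradedPiece k n I (j - i) else ⊥

/-- The graded Betti number `β_{ij}(R/I) = dim_k Tor_i(R/I, k)_j`, computed as the dimension of
the homology of the Koszul complex of `R/I` in homological degree `i` and internal degree `j`. -/
noncomputable def betti (k : Type) [Field k] (n : ℕ)
    (I : Ideal (MvPolynomial (Fin n) k)) (i j : ℕ) : ℕ :=
  Module.finrank k ↥(koszulPiece k n I i j ⊓ LinearMap.ker (koszulD k n I))
    - Module.finrank k ↥((koszulPiece k n I (i + 1) j).map (koszulD k n I))

/-- `M_i(R/I)`, the maximal shift at homological step `i`. -/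
noncomputable def maxShift (k : Type) [Field k] (n : ℕ)
    (I : Ideal (MvPolynomial (Fin n) k)) (i : ℕ) : ℕ :=
  sSup {j | betti k n I i j ≠ 0}

/-- `m_i(R/I)`, the minimal shift at homological step `i`. -/
noncomputable def minShift (k : Type) [Field k] (n : ℕ)
    (I : Ideal (MvPolynomial (Fin n) k)) (i : ℕ) : ℕ :=
  sInf {j | betti k n I i j ≠ 0}

/-- The truncation `I_{≥ d}`: the ideal generated by all homogeneous elements of `I` of
degree at least `d`. -/
noncomputable def trunc {k : Type} [Field k] {n : ℕ} (I : Ideal (MvPolynomial (Fin n) k)) (d : ℕ) :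
    Ideal (MvPolynomial (Fin n) k) :=
  Ideal.span {f | f ∈ I ∧ ∃ e, d ≤ e ∧ f.IsHomogeneous e}

/-- `e` is the multiplicity (degree) of `R/I`: the total vector-space dimension in the
finite-length (Artinian) case, and the normalized leading coefficient of the Hilbert
polynomial otherwise. -/
noncomputable def IsMultiplicity (k : Type) [Field k] (n : ℕ)
    (I : Ideal (MvPolynomial (Fin n) k)) (e : ℚ) : Prop :=
  (∃ N, (∀ t, N ≤ t → hilb k n I t = 0) ∧
      e = ∑ t ∈ Finset.range N, (hilb k n I t : ℚ)) ∨
  ((¬ ∃ N, ∀ t, N ≤ t → hilb k n I t = 0) ∧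
    ∃ P : Polynomial ℚ, P ≠ 0 ∧ (∃ N : ℕ, ∀ t : ℕ, N ≤ t → P.eval (t : ℚ) = (hilb k n I t : ℚ)) ∧
      e = P.leadingCoeff * (P.natDegree).factorial)

/-- The multiplicity (= `dim_k R/I`) of an Artinian quotient `R/I`. -/
noncomputable def amult (k : Type) [Field k] (n : ℕ)
    (I : Ideal (MvPolynomial (Fin n) k)) : ℕ :=
  ∑ᶠ t : ℕ, hilb k n I t

/-- `f₀, f₁, f₂` form a regular sequence on `S`. -/
def RegSeq3 {k : Type} [Field k] (f₀ f₁ f₂ : MvPolynomial (Fin 3) k) : Prop :=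
  f₀ ≠ 0 ∧
    (∀ g, f₁ * g ∈ Ideal.span {f₀} → g ∈ Ideal.span {f₀}) ∧
    (∀ g, f₂ * g ∈ Ideal.span ({f₀, f₁} : Set (MvPolynomial (Fin 3) k)) →
      g ∈ Ideal.span ({f₀, f₁} : Set (MvPolynomial (Fin 3) k)))

namespace Stmt8Aux

variable {k : Type} [Field k]

/-- homogeneous component of a product with a homogeneous polynomial -/
lemma hc_mul {f : MvPolynomial (Fin 3) k} {d : ℕ} (hf : f.IsHomogeneous d)
    (g : MvPolynomial (Fin 3) k) (t : ℕ) :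
    homogeneousComponent t (g * f) =
      if d ≤ t then homogeneousComponent (t - d) g * f else 0 := by
  conv_lhs => rw [← sum_homogeneousComponent g, Finset.sum_mul, map_sum]
  rw [Finset.sum_congr rfl fun j _ =>
    homogeneousComponent_of_mem ((mem_homogeneousSubmodule _ _).2
      ((homogeneousComponent_isHomogeneous j g).mul hf))]
  by_cases h : d ≤ t
  · rw [if_pos h]
    have he : ∀ j : ℕ, (t = j + d) ↔ j = t - d := fun j => by omega
    simp_rw [he]
    rw [Finset.sum_ite_eq' (Finset.range (g.totalDegree + 1)) (t - d)
      (fun j => homogeneousComponent j g * f)]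
    by_cases h2 : t - d ∈ Finset.range (g.totalDegree + 1)
    · rw [if_pos h2]
    · rw [if_neg h2]
      have h3 : g.totalDegree < t - d := by
        simp only [Finset.mem_range, not_lt] at h2; omega
      rw [show homogeneousComponent (t - d) g = 0 from
        homogeneousComponent_eq_zero _ _ h3, zero_mul]
  · rw [if_neg h]
    exact Finset.sum_eq_zero fun j _ => if_neg (by omega)

lemma comp_mem_span (G : Set (MvPolynomial (Fin 3) k))
    (hG : ∀ g ∈ G, ∃ e, MvPolynomial.IsHomogeneous g e)
    {p : MvPolynomial (Fin 3) k} (hp : p ∈ Ideal.span G) :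
    ∀ t, homogeneousComponent t p ∈ Ideal.span G := by
  refine Submodule.span_induction
    (p := fun x _ => ∀ t, homogeneousComponent t x ∈ Ideal.span G) ?_ ?_ ?_ ?_ hp
  · intro g hg t
    obtain ⟨e, he⟩ := hG g hg
    rw [homogeneousComponent_of_mem ((mem_homogeneousSubmodule _ _).2 he)]
    split
    · exact Ideal.subset_span hg
    · exact zero_mem _
  · intro t; simp
  · intro x y _ _ hx hy t; rw [map_add]; exact add_mem (hx t) (hy t)
  · intro a x _ hx t
    rw [smul_eq_mul, mul_comm]
    have hxa : x * a = ∑ j ∈ Finset.range (a.totalDegree + 1), x * homogeneousComponent j a := by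
      conv_lhs => rw [← sum_homogeneousComponent a]
      rw [Finset.mul_sum]
    rw [hxa, map_sum]
    refine sum_mem fun j _ => ?_
    rw [hc_mul (homogeneousComponent_isHomogeneous j a) x t]
    split
    · exact Ideal.mul_mem_right _ _ (hx _)
    · exact zero_mem _

lemma comp_low (G : Set (MvPolynomial (Fin 3) k))
    (hG : ∀ g ∈ G, MvPolynomial.IsHomogeneous g 5)
    {p : MvPolynomial (Fin 3) k} (hp : p ∈ Ideal.span G) :
    ∀ u, u < 5 → homogeneousComponent u p = 0 := by
  refine Submodule.span_induction
    (p := fun x _ => ∀ u, u < 5 → homogeneousComponent u x = 0) ?_ ?_ ?_ ?_ hp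
  · intro g hg u hu
    rw [homogeneousComponent_of_mem ((mem_homogeneousSubmodule _ _).2 (hG g hg)),
      if_neg (by omega)]
  · intro u _; simp
  · intro x y _ _ hx hy u hu; rw [map_add, hx u hu, hy u hu, add_zero]
  · intro a x _ hx u hu
    rw [smul_eq_mul, mul_comm]
    have hxa : x * a = ∑ j ∈ Finset.range (a.totalDegree + 1), x * homogeneousComponent j a := by
      conv_lhs => rw [← sum_homogeneousComponent a]
      rw [Finset.mul_sum]
    rw [hxa, map_sum]
    refine Finset.sum_eq_zero fun j _ => ?_
    rw [hc_mul (homogeneousComponent_isHomogeneous j a) x u]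
    split
    · rename_i hj
      rw [hx (u - j) (by omega), zero_mul]
    · rfl

lemma degree_univ_sum (d : Fin 3 →₀ ℕ) : d.degree = ∑ i, d i :=
  Finset.sum_subset (Finset.subset_univ _) (fun i _ hi => Finsupp.notMem_support_iff.mp hi)

/-- Monomial exponents of degree `t` correspond to antidiagonal tuples. -/
noncomputable def degEquiv (t : ℕ) :
    ↥{d : Fin 3 →₀ ℕ | d.degree = t} ≃ {x // x ∈ Finset.Nat.antidiagonalTuple 3 t} where
  toFun d := ⟨⇑d.1, by
    rw [Finset.Nat.mem_antidiagonalTuple, ← degree_univ_sum]; exact d.2⟩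
  invFun x := ⟨Finsupp.equivFunOnFinite.symm x.1, by
    have := Finset.Nat.mem_antidiagonalTuple.mp x.2
    simp only [Set.mem_setOf_eq, degree_univ_sum]
    simpa using this⟩
  left_inv d := by
    ext1
    exact Finsupp.equivFunOnFinite.symm_apply_apply d.1
  right_inv x := by
    ext1
    exact Finsupp.equivFunOnFinite.apply_symm_apply x.1

noncomputable def homEquiv (t : ℕ) :
    ↥(homogeneousSubmodule (Fin 3) k t) ≃ₗ[k]
      ({x // x ∈ Finset.Nat.antidiagonalTuple 3 t} →₀ k) :=
  (LinearEquiv.ofEq _ _ (homogeneousSubmodule_eq_finsupp_supported (Fin 3) k t)).trans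
    ((AddMonoidAlgebra.supportedEquivFinsupp _).trans (Finsupp.domLCongr (degEquiv t)))

instance (t : ℕ) : FiniteDimensional k ↥(homogeneousSubmodule (Fin 3) k t) :=
  Module.Finite.equiv (homEquiv (k := k) t).symm

lemma sigma_eq (t : ℕ) :
    Module.finrank k ↥(homogeneousSubmodule (Fin 3) k t) =
      (Finset.Nat.antidiagonalTuple 3 t).card := by
  rw [(homEquiv (k := k) t).finrank_eq, Module.finrank_finsupp_self, Fintype.card_coe]

noncomputable def cdim (A : Ideal (MvPolynomial (Fin 3) k)) (t : ℕ) : ℕ :=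
  Module.finrank k
    ↥(Submodule.restrictScalars k A ⊓ homogeneousSubmodule (Fin 3) k t)

lemma hilb_add_cdim (A : Ideal (MvPolynomial (Fin 3) k)) (t : ℕ) :
    hilb k 3 A t + cdim A t
      = Module.finrank k ↥(homogeneousSubmodule (Fin 3) k t) := by
  classical
  set φ := ((Ideal.Quotient.mkₐ k A).toLinearMap).domRestrict
    (homogeneousSubmodule (Fin 3) k t) with hφ
  have h1 : LinearMap.range φ = gradedPiece k 3 A t :=
    LinearMap.range_domRestrict _ _
  have h2 : LinearMap.ker φ
      = Submodule.comap (homogeneousSubmodule (Fin 3) k t).subtype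
        (Submodule.restrictScalars k A ⊓ homogeneousSubmodule (Fin 3) k t) := by
    ext x
    simp only [LinearMap.mem_ker, hφ, LinearMap.domRestrict_apply, AlgHom.toLinearMap_apply,
      Ideal.Quotient.mkₐ_eq_mk, Submodule.mem_comap, Submodule.coe_subtype, Submodule.mem_inf,
      Submodule.restrictScalars_mem, Ideal.Quotient.eq_zero_iff_mem]
    exact ⟨fun h => ⟨h, x.2⟩, fun h => h.1⟩
  have h3 := LinearMap.finrank_range_add_finrank_ker φ
  rw [h1, h2] at h3
  rw [show Module.finrank k
      ↥(Submodule.comap (homogeneousSubmodule (Fin 3) k t).subtype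
        (Submodule.restrictScalars k A ⊓ homogeneousSubmodule (Fin 3) k t)) = cdim A t from
    (Submodule.comapSubtypeEquivOfLe inf_le_right).finrank_eq] at h3
  exact h3

/-- Key lemma: dimension count for `0 → (S/(A:f))(-5) → S/A → S/(A+(f)) → 0`. -/
lemma master (A : Ideal (MvPolynomial (Fin 3) k))
    (hA : ∀ p ∈ A, ∀ t, homogeneousComponent t p ∈ A)
    {f : MvPolynomial (Fin 3) k} (hf : f.IsHomogeneous 5) (hf0 : f ≠ 0) (s : ℕ) :
    cdim (A ⊔ Ideal.span {f}) (s + 5) + cdim (A.colon (Ideal.span {f})) s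
      = cdim A (s + 5)
        + Module.finrank k ↥(homogeneousSubmodule (Fin 3) k s) := by
  classical
  set L : MvPolynomial (Fin 3) k →ₗ[k] MvPolynomial (Fin 3) k := LinearMap.mulLeft k f with hL
  have hLapp : ∀ g, L g = f * g := fun g => rfl
  have hLinj : Function.Injective L := fun a b hab => by
    rw [hLapp, hLapp] at hab
    exact mul_left_cancel₀ hf0 hab
  set X := Submodule.restrictScalars k A ⊓ homogeneousSubmodule (Fin 3) k (s + 5) with hX
  set Y := (homogeneousSubmodule (Fin 3) k s).map L with hYdef
  have hY5 : Y ≤ homogeneousSubmodule (Fin 3) k (s + 5) := by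
    rintro y hy
    obtain ⟨g, hg, rfl⟩ := Submodule.mem_map.mp hy
    rw [mem_homogeneousSubmodule] at hg ⊢
    rw [hLapp]
    simpa [add_comm] using hf.mul hg
  haveI : FiniteDimensional k X := Submodule.finiteDimensional_of_le inf_le_right
  haveI : FiniteDimensional k Y := Submodule.finiteDimensional_of_le hY5
  -- Claim (i): the degree-(s+5) part of A + (f)
  have hi : Submodule.restrictScalars k (A ⊔ Ideal.span {f})
      ⊓ homogeneousSubmodule (Fin 3) k (s + 5) = X ⊔ Y := by
    apply le_antisymm
    · intro p hp
      obtain ⟨hp1, hp2⟩ := Submodule.mem_inf.mp hp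
      rw [Submodule.restrictScalars_mem] at hp1
      obtain ⟨a, ha, q, hq, rfl⟩ := Submodule.mem_sup.mp hp1
      obtain ⟨g, rfl⟩ := Ideal.mem_span_singleton'.mp hq
      have hpc : homogeneousComponent (s + 5) (a + g * f) = a + g * f := by
        rw [homogeneousComponent_of_mem hp2, if_pos rfl]
      rw [map_add, hc_mul hf g (s + 5), if_pos (by omega),
        show s + 5 - 5 = s from by omega] at hpc
      rw [← hpc]
      refine Submodule.add_mem_sup ?_ ?_
      · exact Submodule.mem_inf.mpr ⟨hA a ha (s + 5), homogeneousComponent_mem _ _⟩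
      · exact Submodule.mem_map.mpr ⟨homogeneousComponent s g,
          homogeneousComponent_mem _ _, by rw [hLapp, mul_comm]⟩
    · refine sup_le ?_ ?_
      · intro x hx
        obtain ⟨hx1, hx2⟩ := Submodule.mem_inf.mp hx
        exact Submodule.mem_inf.mpr ⟨Submodule.mem_sup_left hx1, hx2⟩
      · intro y hy
        obtain ⟨g, _, rfl⟩ := Submodule.mem_map.mp hy
        refine Submodule.mem_inf.mpr ⟨?_, hY5 hy⟩
        rw [Submodule.restrictScalars_mem, hLapp]
        exact Submodule.mem_sup_right (Ideal.mul_mem_right g _ (Ideal.subset_span rfl))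
  -- Claim (iv): the intersection is f · (degree-s part of A : f)
  have hiv : X ⊓ Y = (Submodule.restrictScalars k (A.colon (Ideal.span {f}))
      ⊓ homogeneousSubmodule (Fin 3) k s).map L := by
    apply le_antisymm
    · intro x hx
      obtain ⟨hxX, hxY⟩ := Submodule.mem_inf.mp hx
      obtain ⟨hxA, _⟩ := Submodule.mem_inf.mp hxX
      obtain ⟨g, hg, rfl⟩ := Submodule.mem_map.mp hxY
      rw [Submodule.restrictScalars_mem, hLapp] at hxA
      refine Submodule.mem_map.mpr ⟨g, Submodule.mem_inf.mpr ⟨?_, hg⟩, rfl⟩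
      rw [Submodule.restrictScalars_mem, Ideal.mem_colon_span_singleton, mul_comm]
      exact hxA
    · intro x hx
      obtain ⟨g, hg, rfl⟩ := Submodule.mem_map.mp hx
      obtain ⟨hgc, hgs⟩ := Submodule.mem_inf.mp hg
      rw [Submodule.restrictScalars_mem, Ideal.mem_colon_span_singleton] at hgc
      refine Submodule.mem_inf.mpr ⟨Submodule.mem_inf.mpr ⟨?_, ?_⟩, ?_⟩
      · rw [Submodule.restrictScalars_mem, hLapp, mul_comm]
        exact hgc
      · rw [hLapp, mem_homogeneousSubmodule]
        simpa [add_comm] using hf.mul (mem_homogeneousSubmodule _ _ |>.mp hgs)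
      · exact Submodule.mem_map.mpr ⟨g, hgs, rfl⟩
  have count := Submodule.finrank_sup_add_finrank_inf_eq X Y
  have hYr : Module.finrank k ↥Y
      = Module.finrank k ↥(homogeneousSubmodule (Fin 3) k s) :=
    (Submodule.equivMapOfInjective L hLinj (homogeneousSubmodule (Fin 3) k s)).finrank_eq.symm
  have hXY : Module.finrank k ↥(X ⊓ Y) = cdim (A.colon (Ideal.span {f})) s := by
    rw [hiv, cdim]
    exact (Submodule.equivMapOfInjective L hLinj _).finrank_eq.symm
  have hB : cdim (A ⊔ Ideal.span {f}) (s + 5) = Module.finrank k ↥(X ⊔ Y) := by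
    rw [cdim, hi]
  have hAX : cdim A (s + 5) = Module.finrank k ↥X := rfl
  rw [hB, hAX, ← hXY, ← hYr]
  exact count

lemma cdim_bot (t : ℕ) : cdim (⊥ : Ideal (MvPolynomial (Fin 3) k)) t = 0 := by
  rw [cdim]
  rw [show Submodule.restrictScalars k (⊥ : Ideal (MvPolynomial (Fin 3) k)) = ⊥ from rfl,
    bot_inf_eq]
  exact finrank_bot k _

lemma hA_bot : ∀ p ∈ (⊥ : Ideal (MvPolynomial (Fin 3) k)), ∀ t,
    homogeneousComponent t p ∈ (⊥ : Ideal (MvPolynomial (Fin 3) k)) := by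
  intro p hp t
  rw [Ideal.mem_bot] at hp ⊢
  rw [hp, map_zero]

lemma colon_bot {f : MvPolynomial (Fin 3) k} (hf0 : f ≠ 0) :
    (⊥ : Ideal (MvPolynomial (Fin 3) k)).colon (Ideal.span {f}) = ⊥ := by
  ext g
  rw [Ideal.mem_colon_span_singleton, Ideal.mem_bot, Ideal.mem_bot, mul_eq_zero]
  simp [hf0]

lemma cdim_low (G : Set (MvPolynomial (Fin 3) k))
    (hG : ∀ g ∈ G, MvPolynomial.IsHomogeneous g 5) (u : ℕ) (hu : u < 5) :
    cdim (Ideal.span G) u = 0 := by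
  have hbot : Submodule.restrictScalars k (Ideal.span G)
      ⊓ homogeneousSubmodule (Fin 3) k u = ⊥ := by
    rw [eq_bot_iff]
    intro p hp
    obtain ⟨h1, h2⟩ := Submodule.mem_inf.mp hp
    rw [Submodule.restrictScalars_mem] at h1
    have h0 := comp_low G hG h1 u hu
    rw [homogeneousComponent_of_mem h2, if_pos rfl] at h0
    simpa [Submodule.mem_bot] using h0
  rw [cdim, hbot]
  exact finrank_bot k _

lemma step_up (Jid : Ideal (MvPolynomial (Fin 3) k))
    (h3 : ∀ p : MvPolynomial (Fin 3) k, p.IsHomogeneous 3 → p ∈ Jid) :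
    ∀ (e : ℕ) (p : MvPolynomial (Fin 3) k), p.IsHomogeneous (3 + e) → p ∈ Jid := by
  intro e
  induction e with
  | zero => exact fun p hp => h3 p hp
  | succ e ih =>
    intro p hp
    rw [p.as_sum]
    refine Submodule.sum_mem _ fun d hd => ?_
    have hdeg : d.degree = 3 + e + 1 := by
      rw [Finsupp.degree_eq_weight_one]
      exact hp (MvPolynomial.mem_support_iff.mp hd)
    obtain ⟨i, hi⟩ : ∃ i, d i ≠ 0 := by
      by_contra hcon
      push_neg at hcon
      have hd0 : d = 0 := Finsupp.ext fun i => hcon i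
      rw [hd0, map_zero] at hdeg
      omega
    set d' := d - Finsupp.single i 1 with hd'
    have hdd : Finsupp.single i 1 + d' = d := by
      ext j
      rcases eq_or_ne i j with rfl | hj
      · simp only [Finsupp.add_apply, Finsupp.tsub_apply, Finsupp.single_eq_same, hd']
        omega
      · simp only [Finsupp.add_apply, Finsupp.tsub_apply, Finsupp.single_eq_of_ne' hj, hd']
        omega
    have hd'deg : d'.degree = 3 + e := by
      have h1 : (Finsupp.single i 1).degree + d'.degree = d.degree := by
        rw [← hdd, degree_univ_sum, degree_univ_sum, degree_univ_sum,
          ← Finset.sum_add_distrib]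
        rfl
      have h2 : (Finsupp.single i 1).degree = 1 := by
        rw [degree_univ_sum]
        simp [Finsupp.single_apply]
      omega
    have hmono : monomial d (MvPolynomial.coeff d p)
        = X i * monomial d' (MvPolynomial.coeff d p) := by
      rw [MvPolynomial.X, MvPolynomial.monomial_mul, one_mul, hdd]
    rw [hmono]
    exact Ideal.mul_mem_left _ _ (ih _ (isHomogeneous_monomial _ hd'deg))

end Stmt8Aux

/-- Example 3.5. There is no ideal `I = (f₁,f₂,f₃,f₄) ⊆ S = k[a,b,c]`
generated by four quintics, with `f₁,f₂,f₃` a regular sequence, such that `S/I` has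
Hilbert function `(1,3,6,10,15,17,17,17,15,10,0,0,…)`. -/
theorem stmt8 (k : Type) [Field k] (f : Fin 4 → MvPolynomial (Fin 3) k)
    (hf : ∀ i, (f i).IsHomogeneous 5) (hreg : RegSeq3 (f 0) (f 1) (f 2))
    (hH : ∀ t, hilb k 3 (Ideal.span (Set.range f)) t =
      [1, 3, 6, 10, 15, 17, 17, 17, 15, 10].getD t 0) :
    False := by
  classical
  obtain ⟨hf0ne, hr1, hr2⟩ := hreg
  -- dimensions of the graded pieces of S
  have σ0 : Module.finrank k ↥(homogeneousSubmodule (Fin 3) k 0) = 1 := by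
    rw [Stmt8Aux.sigma_eq]; decide
  have σ3 : Module.finrank k ↥(homogeneousSubmodule (Fin 3) k 3) = 10 := by
    rw [Stmt8Aux.sigma_eq]; decide
  have σ5 : Module.finrank k ↥(homogeneousSubmodule (Fin 3) k 5) = 21 := by
    rw [Stmt8Aux.sigma_eq]; decide
  have σ8 : Module.finrank k ↥(homogeneousSubmodule (Fin 3) k 8) = 45 := by
    rw [Stmt8Aux.sigma_eq]; decide
  have σ10 : Module.finrank k ↥(homogeneousSubmodule (Fin 3) k 10) = 66 := by
    rw [Stmt8Aux.sigma_eq]; decide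
  set B1 := Ideal.span ({f 0} : Set (MvPolynomial (Fin 3) k)) with hB1
  set B2 := Ideal.span ({f 0, f 1} : Set (MvPolynomial (Fin 3) k)) with hB2
  set C := Ideal.span ({f 0, f 1, f 2} : Set (MvPolynomial (Fin 3) k)) with hC
  set I := Ideal.span (Set.range f) with hI
  set J := C.colon (Ideal.span {f 3}) with hJ
  -- structure of the ideals as sups
  have hB1sup : B1 = (⊥ : Ideal (MvPolynomial (Fin 3) k)) ⊔ Ideal.span {f 0} := by
    rw [bot_sup_eq]
  have hB2sup : B2 = B1 ⊔ Ideal.span {f 1} := by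
    rw [hB2, hB1, show ({f 0, f 1} : Set (MvPolynomial (Fin 3) k)) = {f 0} ∪ {f 1} from
      Set.insert_eq _ _, Ideal.span_union]
  have hCsup : C = B2 ⊔ Ideal.span {f 2} := by
    rw [hC, hB2, show ({f 0, f 1, f 2} : Set (MvPolynomial (Fin 3) k)) = {f 0, f 1} ∪ {f 2} by
      ext x; (try simp); tauto, Ideal.span_union]
  have hrange : Set.range f = {f 0, f 1, f 2, f 3} := by
    ext x
    constructor
    · rintro ⟨i, rfl⟩; fin_cases i <;> simp
    · rintro (rfl | rfl | rfl | rfl) <;> exact ⟨_, rfl⟩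
  have hIsup : I = C ⊔ Ideal.span {f 3} := by
    rw [hI, hrange, hC, show ({f 0, f 1, f 2, f 3} : Set (MvPolynomial (Fin 3) k))
      = {f 0, f 1, f 2} ∪ {f 3} by ext x; (try simp); tauto, Ideal.span_union]
  -- homogeneity of generating sets
  have hGB1 : ∀ g ∈ ({f 0} : Set (MvPolynomial (Fin 3) k)), MvPolynomial.IsHomogeneous g 5 := by
    intro g hg
    simp only [Set.mem_singleton_iff] at hg
    subst hg; exact hf 0
  have hGB2 : ∀ g ∈ ({f 0, f 1} : Set (MvPolynomial (Fin 3) k)),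
      MvPolynomial.IsHomogeneous g 5 := by
    intro g hg
    simp only [Set.mem_insert_iff, Set.mem_singleton_iff] at hg
    rcases hg with rfl | rfl
    exacts [hf 0, hf 1]
  have hGC : ∀ g ∈ ({f 0, f 1, f 2} : Set (MvPolynomial (Fin 3) k)),
      MvPolynomial.IsHomogeneous g 5 := by
    intro g hg
    simp only [Set.mem_insert_iff, Set.mem_singleton_iff] at hg
    rcases hg with rfl | rfl | rfl
    exacts [hf 0, hf 1, hf 2]
  have hAB1 : ∀ p ∈ B1, ∀ t, homogeneousComponent t p ∈ B1 := by
    intro p hp t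
    rw [hB1] at hp ⊢
    exact Stmt8Aux.comp_mem_span _ (fun g hg => ⟨5, hGB1 g hg⟩) hp t
  have hAB2 : ∀ p ∈ B2, ∀ t, homogeneousComponent t p ∈ B2 := by
    intro p hp t
    rw [hB2] at hp ⊢
    exact Stmt8Aux.comp_mem_span _ (fun g hg => ⟨5, hGB2 g hg⟩) hp t
  have hAC : ∀ p ∈ C, ∀ t, homogeneousComponent t p ∈ C := by
    intro p hp t
    rw [hC] at hp ⊢
    exact Stmt8Aux.comp_mem_span _ (fun g hg => ⟨5, hGC g hg⟩) hp t
  -- Hilbert function of I at the relevant degrees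
  have F0 := Stmt8Aux.hilb_add_cdim I 0
  have F8 := Stmt8Aux.hilb_add_cdim I 8
  have F10 := Stmt8Aux.hilb_add_cdim I 10
  have h0 : hilb k 3 I 0 = 1 := by
    have := hH 0; rwa [show ([1, 3, 6, 10, 15, 17, 17, 17, 15, 10].getD 0 0) = 1 from rfl] at this
  have h8 : hilb k 3 I 8 = 15 := by
    have := hH 8; rwa [show ([1, 3, 6, 10, 15, 17, 17, 17, 15, 10].getD 8 0) = 15 from rfl] at this
  have h10 : hilb k 3 I 10 = 0 := by
    have := hH 10
    rwa [show ([1, 3, 6, 10, 15, 17, 17, 17, 15, 10].getD 10 0) = 0 from rfl] at this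
  -- f 1 and f 2 are nonzero
  have hf1ne : f 1 ≠ 0 := by
    intro h1z
    have hone : (1 : MvPolynomial (Fin 3) k) ∈ B1 :=
      hr1 1 (by rw [h1z, zero_mul]; exact zero_mem _)
    have honeI : (1 : MvPolynomial (Fin 3) k) ∈ I := by
      rw [hI]
      refine Ideal.span_mono ?_ (hB1 ▸ hone)
      rw [hrange]
      intro x hx
      simp only [Set.mem_singleton_iff] at hx
      subst hx
      simp
    have htop : I = ⊤ := (Ideal.eq_top_iff_one I).mpr honeI
    have hc1 : Stmt8Aux.cdim I 0 = 1 := by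
      rw [Stmt8Aux.cdim, htop,
        show Submodule.restrictScalars k (⊤ : Ideal (MvPolynomial (Fin 3) k)) = ⊤ from rfl,
        top_inf_eq]
      exact σ0
    omega
  have hf2ne : f 2 ≠ 0 := by
    intro h2z
    have hone : (1 : MvPolynomial (Fin 3) k) ∈ B2 :=
      hr2 1 (by rw [h2z, zero_mul]; exact zero_mem _)
    have honeI : (1 : MvPolynomial (Fin 3) k) ∈ I := by
      rw [hI]
      refine Ideal.span_mono ?_ (hB2 ▸ hone)
      rw [hrange]
      intro x hx
      simp only [Set.mem_insert_iff, Set.mem_singleton_iff] at hx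
      rcases hx with rfl | rfl <;> simp
    have htop : I = ⊤ := (Ideal.eq_top_iff_one I).mpr honeI
    have hc1 : Stmt8Aux.cdim I 0 = 1 := by
      rw [Stmt8Aux.cdim, htop,
        show Submodule.restrictScalars k (⊤ : Ideal (MvPolynomial (Fin 3) k)) = ⊤ from rfl,
        top_inf_eq]
      exact σ0
    omega
  -- colon identities from regularity
  have hcolon1 : B1.colon (Ideal.span {f 1}) = B1 := by
    ext g
    rw [Ideal.mem_colon_span_singleton]
    constructor
    · intro h; exact hr1 g (by rwa [mul_comm] at h)
    · intro h; exact Ideal.mul_mem_right _ _ h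
  have hcolon2 : B2.colon (Ideal.span {f 2}) = B2 := by
    ext g
    rw [Ideal.mem_colon_span_singleton]
    constructor
    · intro h; exact hr2 g (by rwa [mul_comm] at h)
    · intro h; exact Ideal.mul_mem_right _ _ h
  -- low degrees
  have l1 : ∀ u, u < 5 → Stmt8Aux.cdim B1 u = 0 := by
    intro u hu; rw [hB1]; exact Stmt8Aux.cdim_low _ hGB1 u hu
  have l2 : ∀ u, u < 5 → Stmt8Aux.cdim B2 u = 0 := by
    intro u hu; rw [hB2]; exact Stmt8Aux.cdim_low _ hGB2 u hu
  have l1a := l1 0 (by norm_num)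
  have l1b := l1 3 (by norm_num)
  have l2a := l2 0 (by norm_num)
  have l2b := l2 3 (by norm_num)
  -- step equations
  have E0 : ∀ s : ℕ, Stmt8Aux.cdim B1 (s + 5)
      = Module.finrank k ↥(homogeneousSubmodule (Fin 3) k s) := by
    intro s
    have hm := Stmt8Aux.master (⊥ : Ideal (MvPolynomial (Fin 3) k)) Stmt8Aux.hA_bot
      (hf 0) hf0ne s
    rw [Stmt8Aux.colon_bot hf0ne, Stmt8Aux.cdim_bot, Stmt8Aux.cdim_bot, ← hB1sup] at hm
    omega
  have E1 : ∀ s : ℕ, Stmt8Aux.cdim B2 (s + 5) + Stmt8Aux.cdim B1 s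
      = Stmt8Aux.cdim B1 (s + 5) + Module.finrank k ↥(homogeneousSubmodule (Fin 3) k s) := by
    intro s
    have hm := Stmt8Aux.master B1 hAB1 (hf 1) hf1ne s
    rwa [hcolon1, ← hB2sup] at hm
  have E2 : ∀ s : ℕ, Stmt8Aux.cdim C (s + 5) + Stmt8Aux.cdim B2 s
      = Stmt8Aux.cdim B2 (s + 5) + Module.finrank k ↥(homogeneousSubmodule (Fin 3) k s) := by
    intro s
    have hm := Stmt8Aux.master B2 hAB2 (hf 2) hf2ne s
    rwa [hcolon2, ← hCsup] at hm
  have E0a := E0 0; have E0b := E0 3; have E0c := E0 5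
  have E1a := E1 0; have E1b := E1 3; have E1c := E1 5
  have E2b := E2 3; have E2c := E2 5
  norm_num at E0a E0b E0c E1a E1b E1c E2b E2c
  by_cases hf3ne : f 3 = 0
  · -- then I = C, contradicting the Hilbert function in degree 10
    have hIC : I = C := by
      rw [hIsup, Ideal.span_singleton_eq_bot.mpr hf3ne, sup_bot_eq]
    have hcc : Stmt8Aux.cdim I 10 = Stmt8Aux.cdim C 10 := by rw [hIC]
    omega
  · -- linkage step
    have E3 : ∀ s : ℕ, Stmt8Aux.cdim I (s + 5) + Stmt8Aux.cdim J s
        = Stmt8Aux.cdim C (s + 5) + Module.finrank k ↥(homogeneousSubmodule (Fin 3) k s) := by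
      intro s
      have hm := Stmt8Aux.master C hAC (hf 3) hf3ne s
      rwa [← hJ, ← hIsup] at hm
    have E3b := E3 3; have E3c := E3 5
    norm_num at E3b E3c
    -- the degree-3 piece of S/J vanishes
    have hcJ3 : Stmt8Aux.cdim J 3
        = Module.finrank k ↥(homogeneousSubmodule (Fin 3) k 3) := by omega
    have hinf3 : Submodule.restrictScalars k J ⊓ homogeneousSubmodule (Fin 3) k 3
        = homogeneousSubmodule (Fin 3) k 3 :=
      Submodule.eq_of_le_of_finrank_eq inf_le_right hcJ3
    have h3 : ∀ p : MvPolynomial (Fin 3) k, p.IsHomogeneous 3 → p ∈ J := by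
      intro p hp
      have hmem : p ∈ Submodule.restrictScalars k J ⊓ homogeneousSubmodule (Fin 3) k 3 := by
        rw [hinf3]; exact hp
      exact (Submodule.mem_inf.mp hmem).1
    have h5 : ∀ p : MvPolynomial (Fin 3) k, p.IsHomogeneous 5 → p ∈ J := by
      intro p hp
      exact Stmt8Aux.step_up J h3 2 p hp
    have hcJ5 : Stmt8Aux.cdim J 5
        = Module.finrank k ↥(homogeneousSubmodule (Fin 3) k 5) := by
      rw [Stmt8Aux.cdim, inf_eq_right.mpr (fun p hp => h5 p hp)]
    omega
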